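/- Desnanot–Jacobi identity: for any (n+1)×(n+1) matrix M over a commutative ring, det(M)·det(M with first and last row and column removed) = det(M with first row, first column removed)·det(M with last row, last column removed) − det(M with first row, last column removed)·det(M with last row, first column removed). -/

import Mathlib

open Matrix

namespace DesnanotJacobiAux

variable {n : ℕ}

/-- The embedding of `Fin 2 ⊕ Fin n` into `Fin (n + 2)` sending `inl 0` to `0`,
`inl 1` to `last`, and `inr i` to the interior index `i + 1`. -/
def f (n : ℕ) : Fin 2 ⊕ Fin n → Fin (n + 2) :=
  Sum.elim ![0, Fin.last (n + 1)]
    (fun i => (Fin.last (n + 1)).succAbove ((0 : Fin (n + 1)).succAbove i))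

lemma f_inr_val (i : Fin n) : (f n (Sum.inr i)).val = i.val + 1 := by
  simp [f, Fin.succAbove_zero, Fin.succAbove_last]

lemma f_inj : Function.Injective (f n) := by
  rintro (a | a) (b | b) h
  · congr 1
    fin_cases a <;> fin_cases b <;> simp_all [f]
  · exfalso
    have h' := congrArg Fin.val h
    rw [f_inr_val] at h'
    have hb := b.is_lt
    fin_cases a <;> simp [f, Fin.last] at h' <;> omega
  · exfalso
    have h' := congrArg Fin.val h
    rw [f_inr_val] at h'
    have ha := a.is_lt
    fin_cases b <;> simp [f, Fin.last] at h' <;> omega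
  · have h' := congrArg Fin.val h
    rw [f_inr_val, f_inr_val] at h'
    exact congrArg Sum.inr (Fin.ext (by omega))

/-- The corresponding equivalence. -/
noncomputable def e (n : ℕ) : Fin 2 ⊕ Fin n ≃ Fin (n + 2) :=
  Equiv.ofBijective (f n)
    ((Fintype.bijective_iff_injective_and_card _).mpr ⟨f_inj, by simp [add_comm]⟩)

lemma e_apply (x : Fin 2 ⊕ Fin n) : e n x = f n x := rfl

theorem key {R : Type*} [CommRing R] {n : ℕ} (M : Matrix (Fin (n + 2)) (Fin (n + 2)) R) :
    M.det *
      ((M.submatrix (Fin.succAbove 0) (Fin.succAbove 0)).det *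
          (M.submatrix (Fin.succAbove (Fin.last (n + 1)))
            (Fin.succAbove (Fin.last (n + 1)))).det -
        (M.submatrix (Fin.succAbove 0) (Fin.succAbove (Fin.last (n + 1)))).det *
          (M.submatrix (Fin.succAbove (Fin.last (n + 1))) (Fin.succAbove 0)).det) =
    M.det * (M.det *
      (M.submatrix (fun i : Fin n => f n (Sum.inr i)) (fun j : Fin n => f n (Sum.inr j))).det) := by
  set A := adjugate M with hA
  set B : Matrix (Fin 2 ⊕ Fin n) (Fin 2 ⊕ Fin n) R :=
    fromBlocks (of fun i j => A (f n (Sum.inl i)) (f n (Sum.inl j))) 0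
      (of fun i j => A (f n (Sum.inr i)) (f n (Sum.inl j))) 1 with hBdef
  have hN : (M.submatrix (e n) (e n)).det = M.det := det_submatrix_equiv_self _ _
  have hNB : M.submatrix (e n) (e n) * B =
      fromBlocks (M.det • 1) (of fun i j => M (f n (Sum.inl i)) (f n (Sum.inr j))) 0
        (of fun i j => M (f n (Sum.inr i)) (f n (Sum.inr j))) := by
    ext i j
    rcases j with j | j
    · have hsum : (M.submatrix (e n) (e n) * B) i (Sum.inl j) =
          (M * A) (f n i) (f n (Sum.inl j)) := by
        rw [mul_apply, mul_apply,
          ← Equiv.sum_comp (e n) (fun k => M (f n i) k * A k (f n (Sum.inl j)))]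
        refine Finset.sum_congr rfl fun k _ => ?_
        rcases k with k | k <;> rfl
      rw [hsum, mul_adjugate]
      rcases i with i | i
      · have hij : (f n (Sum.inl i) = f n (Sum.inl j)) ↔ (i = j) := by
          rw [f_inj.eq_iff]; simp
        simp [one_apply, hij, e_apply]
      · have hne : f n (Sum.inr i) ≠ f n (Sum.inl j) := by
          intro h; exact absurd (f_inj h) (by simp)
        simp [one_apply, hne, e_apply]
    · rcases i with i | i <;>
      · rw [mul_apply, Fintype.sum_sum_type]
        simp [hBdef, one_apply, mul_comm, e_apply]
  have hdet : M.det * B.det = M.det * M.det *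
      (M.submatrix (fun i : Fin n => f n (Sum.inr i)) (fun j : Fin n => f n (Sum.inr j))).det := by
    calc M.det * B.det = (M.submatrix (e n) (e n)).det * B.det := by rw [hN]
      _ = (M.submatrix (e n) (e n) * B).det := (det_mul _ _).symm
      _ = _ := by
          rw [hNB, det_fromBlocks_zero₂₁, det_smul, det_one, Fintype.card_fin]
          ring_nf
          rfl
  have hB : B.det = A 0 0 * A (Fin.last (n + 1)) (Fin.last (n + 1)) -
      A 0 (Fin.last (n + 1)) * A (Fin.last (n + 1)) 0 := by
    rw [hBdef, det_fromBlocks_zero₁₂, det_one, mul_one, det_fin_two]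
    rfl
  have h00 : A 0 0 = (M.submatrix (Fin.succAbove 0) (Fin.succAbove 0)).det := by
    rw [hA, adjugate_fin_succ_eq_det_submatrix]; simp
  have hll : A (Fin.last (n + 1)) (Fin.last (n + 1)) =
      (M.submatrix (Fin.succAbove (Fin.last (n + 1)))
        (Fin.succAbove (Fin.last (n + 1)))).det := by
    rw [hA, adjugate_fin_succ_eq_det_submatrix]
    have : Fin.last (n + 1) = (⟨n + 1, by omega⟩ : Fin (n + 2)) := rfl
    simp [Fin.val_last, pow_add, ← two_mul, pow_mul]
  have h0l : A 0 (Fin.last (n + 1)) = (-1 : R) ^ (n + 1) *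
      (M.submatrix (Fin.succAbove (Fin.last (n + 1))) (Fin.succAbove 0)).det := by
    rw [hA, adjugate_fin_succ_eq_det_submatrix]; simp
  have hl0 : A (Fin.last (n + 1)) 0 = (-1 : R) ^ (n + 1) *
      (M.submatrix (Fin.succAbove 0) (Fin.succAbove (Fin.last (n + 1)))).det := by
    rw [hA, adjugate_fin_succ_eq_det_submatrix]; simp
  have hsign : ((-1 : R) ^ (n + 1)) * ((-1 : R) ^ (n + 1)) = 1 := by
    rw [← pow_add, ← two_mul, pow_mul]; simp
  calc M.det * _ = M.det * B.det := by
        rw [hB, h00, hll, h0l, hl0, mul_mul_mul_comm, hsign, one_mul]; ring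
    _ = _ := by rw [hdet]; ring

end DesnanotJacobiAux

theorem desnanot_jacobi {R : Type*} [CommRing R] {n : ℕ}
    (M : Matrix (Fin (n + 2)) (Fin (n + 2)) R) :
    M.det *
        (M.submatrix (fun i : Fin n => (Fin.last (n + 1)).succAbove ((0 : Fin (n + 1)).succAbove i))
          (fun j : Fin n => (Fin.last (n + 1)).succAbove ((0 : Fin (n + 1)).succAbove j))).det =
      (M.submatrix (Fin.succAbove 0) (Fin.succAbove 0)).det *
          (M.submatrix (Fin.succAbove (Fin.last (n + 1))) (Fin.succAbove (Fin.last (n + 1)))).det -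
        (M.submatrix (Fin.succAbove 0) (Fin.succAbove (Fin.last (n + 1)))).det *
          (M.submatrix (Fin.succAbove (Fin.last (n + 1))) (Fin.succAbove 0)).det := by
  classical
  set K := MvPolynomial (Fin (n + 2) × Fin (n + 2)) ℤ
  set M₀ : Matrix (Fin (n + 2)) (Fin (n + 2)) K := mvPolynomialX (Fin (n + 2)) (Fin (n + 2)) ℤ
    with hM₀
  have hd : M₀.det ≠ 0 := det_mvPolynomialX_ne_zero _ ℤ
  have h₀ := DesnanotJacobiAux.key M₀
  have h₀' := (mul_left_cancel₀ hd h₀).symm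
  -- h₀' : M₀.det * inner = RHS₀
  set φ : K →+* R := MvPolynomial.eval₂Hom (Int.castRingHom R) (fun p => M p.1 p.2) with hφ
  have hmap : M₀.map φ = M := mvPolynomialX_map_eval₂ (Int.castRingHom R) M
  have := congrArg φ h₀'
  simp only [_root_.map_mul, _root_.map_sub, RingHom.map_det, RingHom.mapMatrix_apply, ← Matrix.submatrix_map, hmap,
    DesnanotJacobiAux.f, Sum.elim_inr] at this
  exact this
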